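/- For all natural numbers b, c ≥ 0 and a ≥ 1, the following identity holds in M₂(R): 2^{a+b+c+1}·(xu − yv)·tᵃuᵇvᶜ = [x,y,x]·(ad x)^{2a−1}·(ad y)^{2b+1}·(ad x ad y)ᶜ. -/

import Mathlib

open Matrix MvPolynomial

noncomputable section

set_option maxHeartbeats 2000000
set_option linter.unusedSectionVars false

variable (K : Type*) [Field K] [CharZero K]

/-- The first generic traceless 2×2 matrix `x = !![x₁₁, x₁₂; x₂₁, -x₁₁]` over
`R = K[x₁₁,x₁₂,x₂₁,y₁₁,y₁₂,y₂₁]`, realized as `MvPolynomial (Fin 6) K` with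
`x₁₁ = X 0, x₁₂ = X 1, x₂₁ = X 2, y₁₁ = X 3, y₁₂ = X 4, y₂₁ = X 5`. -/
def x : Matrix (Fin 2) (Fin 2) (MvPolynomial (Fin 6) K) := !![X 0, X 1; X 2, -(X 0)]

/-- The second generic traceless 2×2 matrix `y = !![y₁₁, y₁₂; y₂₁, -y₁₁]`. -/
def y : Matrix (Fin 2) (Fin 2) (MvPolynomial (Fin 6) K) := !![X 3, X 4; X 5, -(X 3)]

/-- `t = tr(x²)`. -/
def t : MvPolynomial (Fin 6) K := (x K * x K).trace

/-- `u = tr(y²)`. -/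
def u : MvPolynomial (Fin 6) K := (y K * y K).trace

/-- `v = tr(xy)`. -/
def v : MvPolynomial (Fin 6) K := (x K * y K).trace

/-- The right adjoint action `z ↦ z(ad w) = [z,w]`. -/
def ad (w z : Matrix (Fin 2) (Fin 2) (MvPolynomial (Fin 6) K)) :
    Matrix (Fin 2) (Fin 2) (MvPolynomial (Fin 6) K) := ⁅z, w⁆

section aux

lemma key1 : ⁅⁅⁅x K, y K⁆, x K⁆, x K⁆ = (2 * t K) • ⁅x K, y K⁆ := by
  refine Matrix.ext fun i j => ?_
  fin_cases i <;> fin_cases j <;>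
    simp only [Ring.lie_def, x, y, t, Fin.mk_zero, Fin.mk_one, Matrix.sub_apply,
      Matrix.smul_apply, smul_eq_mul, Matrix.mul_apply, Fin.sum_univ_two, Matrix.mul_fin_two,
      Matrix.trace_fin_two_of, Matrix.cons_val', Matrix.cons_val_zero,
      Matrix.cons_val_one, Matrix.head_cons, Matrix.empty_val', Matrix.cons_val_fin_one,
      Matrix.head_fin_const, Matrix.of_apply] <;> ring

lemma key2 : ⁅⁅x K, y K⁆, y K⁆ = (2 * u K) • x K - (2 * v K) • y K := by
  refine Matrix.ext fun i j => ?_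
  fin_cases i <;> fin_cases j <;>
    simp only [Ring.lie_def, x, y, u, v, Fin.mk_zero, Fin.mk_one, Matrix.sub_apply,
      Matrix.smul_apply, smul_eq_mul, Matrix.mul_apply, Fin.sum_univ_two, Matrix.mul_fin_two,
      Matrix.trace_fin_two_of, Matrix.cons_val', Matrix.cons_val_zero,
      Matrix.cons_val_one, Matrix.head_cons, Matrix.empty_val', Matrix.cons_val_fin_one,
      Matrix.head_fin_const, Matrix.of_apply] <;> ring

lemma ad_smul (w : Matrix (Fin 2) (Fin 2) (MvPolynomial (Fin 6) K)) (s : MvPolynomial (Fin 6) K)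
    (m : Matrix (Fin 2) (Fin 2) (MvPolynomial (Fin 6) K)) :
    ad K w (s • m) = s • ad K w m := by
  simp only [ad, Ring.lie_def, smul_mul_assoc, mul_smul_comm, smul_sub]

lemma ad_iter_smul (w : Matrix (Fin 2) (Fin 2) (MvPolynomial (Fin 6) K)) (n : ℕ)
    (s : MvPolynomial (Fin 6) K) (m : Matrix (Fin 2) (Fin 2) (MvPolynomial (Fin 6) K)) :
    (ad K w)^[n] (s • m) = s • (ad K w)^[n] m := by
  induction n generalizing m with
  | zero => rfl
  | succ n ih => rw [Function.iterate_succ_apply, Function.iterate_succ_apply, ad_smul, ih]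

lemma adx2 : ad K (x K) (ad K (x K) ⁅x K, y K⁆) = (2 * t K) • ⁅x K, y K⁆ := key1 K

lemma ady2 : ad K (y K) (ad K (y K) ⁅x K, y K⁆) = (2 * u K) • ⁅x K, y K⁆ := by
  show ⁅⁅⁅x K, y K⁆, y K⁆, y K⁆ = _
  rw [key2]
  simp only [Ring.lie_def, sub_mul, mul_sub, smul_mul_assoc, mul_smul_comm, smul_sub]
  abel

lemma adx_even (n : ℕ) : (ad K (x K))^[2 * n] ⁅x K, y K⁆ = ((2 * t K) ^ n) • ⁅x K, y K⁆ := by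
  induction n with
  | zero => simp
  | succ n ih =>
    rw [show 2 * (n + 1) = 2 + 2 * n by ring, Function.iterate_add_apply, ih,
      show (ad K (x K))^[2] = (ad K (x K)) ∘ (ad K (x K)) from rfl, Function.comp_apply,
      ad_smul, ad_smul, adx2, smul_smul, pow_succ]

lemma ady_even (n : ℕ) : (ad K (y K))^[2 * n] ⁅x K, y K⁆ = ((2 * u K) ^ n) • ⁅x K, y K⁆ := by
  induction n with
  | zero => simp
  | succ n ih =>
    rw [show 2 * (n + 1) = 2 + 2 * n by ring, Function.iterate_add_apply, ih,
      show (ad K (y K))^[2] = (ad K (y K)) ∘ (ad K (y K)) from rfl, Function.comp_apply,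
      ad_smul, ad_smul, ady2, smul_smul, pow_succ]

lemma cyc : ad K (y K) (ad K (x K) ((2 * u K) • x K - (2 * v K) • y K)) =
    (2 * v K) • ((2 * u K) • x K - (2 * v K) • y K) := by
  have h1 : ad K (x K) ((2 * u K) • x K - (2 * v K) • y K) = (2 * v K) • ⁅x K, y K⁆ := by
    show ⁅(2 * u K) • x K - (2 * v K) • y K, x K⁆ = _
    simp only [Ring.lie_def, sub_mul, mul_sub, smul_mul_assoc, mul_smul_comm, smul_sub]
    abel
  rw [h1, ad_smul]
  show (2 * v K) • ⁅⁅x K, y K⁆, y K⁆ = _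
  rw [key2]

lemma cyc_iter (c : ℕ) :
    (ad K (y K) ∘ ad K (x K))^[c] ((2 * u K) • x K - (2 * v K) • y K) =
      ((2 * v K) ^ c) • ((2 * u K) • x K - (2 * v K) • y K) := by
  induction c with
  | zero => simp
  | succ c ih =>
    rw [Function.iterate_succ_apply, Function.comp_apply, cyc]
    have : ∀ (n : ℕ) (s : MvPolynomial (Fin 6) K) m, (ad K (y K) ∘ ad K (x K))^[n] (s • m)
        = s • (ad K (y K) ∘ ad K (x K))^[n] m := by
      intro n s m
      induction n generalizing m with
      | zero => rfl
      | succ n ih2 =>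
        rw [Function.iterate_succ_apply, Function.iterate_succ_apply, Function.comp_apply,
          Function.comp_apply, ad_smul, ad_smul, ih2]
    rw [this, ih, smul_smul, pow_succ]
    ring_nf

end aux

/-- For `b, c ≥ 0` and `a ≥ 1`:
`2^{a+b+c+1}(xu − yv)tᵃuᵇvᶜ = [x,y,x](ad x)^{2a−1}(ad y)^{2b+1}(ad x ad y)ᶜ`. -/
theorem stmt_7 (a b c : ℕ) (ha : 1 ≤ a) :
    ((2 : MvPolynomial (Fin 6) K) ^ (a + b + c + 1) * t K ^ a * u K ^ b * v K ^ c) •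
        (u K • x K - v K • y K) =
      (ad K (y K) ∘ ad K (x K))^[c]
        ((ad K (y K))^[2 * b + 1] ((ad K (x K))^[2 * a - 1] ⁅⁅x K, y K⁆, x K⁆)) := by
  have e1 : (ad K (x K))^[2 * a - 1] ⁅⁅x K, y K⁆, x K⁆
      = ((2 * t K) ^ a) • ⁅x K, y K⁆ := by
    have h : (ad K (x K))^[2 * a - 1 + 1] ⁅x K, y K⁆
        = (ad K (x K))^[2 * a - 1] (ad K (x K) ⁅x K, y K⁆) := Function.iterate_succ_apply _ _ _
    rw [show (ad K (x K)) ⁅x K, y K⁆ = ⁅⁅x K, y K⁆, x K⁆ from rfl] at h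
    rw [← h, Nat.sub_add_cancel (by omega), adx_even]
  rw [e1, ad_iter_smul, show (2 : ℕ) * b + 1 = 1 + 2 * b by ring, Function.iterate_add_apply,
    ady_even, ad_iter_smul,
    show (ad K (y K))^[1] ⁅x K, y K⁆ = ⁅⁅x K, y K⁆, y K⁆ from rfl, key2]
  have : ∀ (n : ℕ) (s : MvPolynomial (Fin 6) K) m, (ad K (y K) ∘ ad K (x K))^[n] (s • m)
      = s • (ad K (y K) ∘ ad K (x K))^[n] m := by
    intro n s m
    induction n generalizing m with
    | zero => rfl
    | succ n ih2 =>
      rw [Function.iterate_succ_apply, Function.iterate_succ_apply, Function.comp_apply,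
        Function.comp_apply, ad_smul, ad_smul, ih2]
  rw [this, this, cyc_iter, smul_smul, smul_smul, smul_sub, smul_sub, smul_smul, smul_smul,
    smul_smul, smul_smul]
  refine congrArg₂ (· - ·) (congrArg₂ (· • ·) ?_ rfl) (congrArg₂ (· • ·) ?_ rfl) <;>
    (simp only [mul_pow]; ring)

end
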